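/- Consider deep matrix factorization with a single preconditioned gradient step of learning rate r and scalar preconditioner a with 0 < a ≤ Λ, starting from factors W̃_1,…,W̃_L with product W̃ satisfying ‖W̃_l‖ ≤ M for all l, ‖W̃ − W*‖ ≤ B, and ‖∇ℓ(W̃)‖_F ≤ τ, where ℓ(W) = (1/2)‖W − W*‖_F². If r ≤ 1/(2LΛM^{L−2}B), then the product W(1) after the step satisfies ‖W(1) − W̃‖_F² ≤ 2( r²L²Λ²M^{4L−4} + 4r⁴L⁴Λ⁴M^{6L−8}B² )·τ². -/

import Mathlib

open scoped BigOperators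
open Matrix

/-- Frobenius norm of a real matrix. -/
noncomputable def frobNorm {m n : Type*} [Fintype m] [Fintype n] (A : Matrix m n ℝ) : ℝ :=
  Real.sqrt (∑ i, ∑ j, (A i j) ^ 2)

/-- Spectral norm (largest singular value) of a real matrix. -/
noncomputable def specNorm {m n : Type*} [Fintype m] [Fintype n] (A : Matrix m n ℝ) : ℝ :=
  sSup {c | ∃ x : n → ℝ, (∑ j, x j ^ 2) = 1 ∧ c = Real.sqrt (∑ i, (A.mulVec x i) ^ 2)}


section lemmas
variable {m n p : Type*} [Fintype m] [Fintype n] [Fintype p]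

/-- Cauchy-Schwarz for sqrt sums. -/
lemma sum_mul_le_sqrt {ι : Type*} [Fintype ι] (f g : ι → ℝ) :
    (∑ i, f i * g i) ≤ Real.sqrt (∑ i, f i ^ 2) * Real.sqrt (∑ i, g i ^ 2) := by
  have h := Finset.sum_mul_sq_le_sq_mul_sq Finset.univ f g
  have h2 : (∑ i, f i * g i) ≤ |∑ i, f i * g i| := le_abs_self _
  refine h2.trans ?_
  rw [← Real.sqrt_sq_eq_abs, ← Real.sqrt_mul (by positivity)]
  exact Real.sqrt_le_sqrt h

/-- Minkowski for sqrt sums. -/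
lemma sqrt_sum_add_le {ι : Type*} [Fintype ι] (u v : ι → ℝ) :
    Real.sqrt (∑ i, (u i + v i) ^ 2)
      ≤ Real.sqrt (∑ i, u i ^ 2) + Real.sqrt (∑ i, v i ^ 2) := by
  have key : (∑ i, (u i + v i) ^ 2)
      ≤ (Real.sqrt (∑ i, u i ^ 2) + Real.sqrt (∑ i, v i ^ 2)) ^ 2 := by
    have expand : (∑ i, (u i + v i) ^ 2)
        = (∑ i, u i ^ 2) + 2 * (∑ i, u i * v i) + (∑ i, v i ^ 2) := by
      have h : ∀ i : ι, (u i + v i) ^ 2 = u i ^ 2 + 2 * (u i * v i) + v i ^ 2 :=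
        fun i => by ring
      simp_rw [h, Finset.sum_add_distrib, Finset.mul_sum]
    rw [expand, add_sq, Real.sq_sqrt (by positivity), Real.sq_sqrt (by positivity)]
    have := sum_mul_le_sqrt u v
    nlinarith
  calc Real.sqrt (∑ i, (u i + v i) ^ 2) ≤ Real.sqrt ((Real.sqrt (∑ i, u i ^ 2) + Real.sqrt (∑ i, v i ^ 2)) ^ 2) := Real.sqrt_le_sqrt key
  _ = _ := Real.sqrt_sq (by positivity)

lemma frobNorm_nonneg (A : Matrix m n ℝ) : 0 ≤ frobNorm A := Real.sqrt_nonneg _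

lemma frobNorm_sq (A : Matrix m n ℝ) : frobNorm A ^ 2 = ∑ i, ∑ j, (A i j) ^ 2 :=
  Real.sq_sqrt (by positivity)

lemma specNorm_bddAbove (A : Matrix m n ℝ) :
    BddAbove {c | ∃ x : n → ℝ, (∑ j, x j ^ 2) = 1 ∧ c = Real.sqrt (∑ i, (A.mulVec x i) ^ 2)} := by
  refine ⟨frobNorm A, ?_⟩
  rintro c ⟨x, hx, rfl⟩
  have h1 : ∀ i, (A.mulVec x i) ^ 2 ≤ ∑ j, (A i j) ^ 2 := by
    intro i
    have := Finset.sum_mul_sq_le_sq_mul_sq Finset.univ (fun j => A i j) x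
    simpa [Matrix.mulVec, dotProduct, hx] using this
  have h2 : (∑ i, (A.mulVec x i) ^ 2) ≤ ∑ i, ∑ j, (A i j) ^ 2 :=
    Finset.sum_le_sum fun i _ => h1 i
  exact Real.sqrt_le_sqrt h2

lemma specNorm_nonneg (A : Matrix m n ℝ) : 0 ≤ specNorm A := by
  rcases Set.eq_empty_or_nonempty {c | ∃ x : n → ℝ, (∑ j, x j ^ 2) = 1 ∧ c = Real.sqrt (∑ i, (A.mulVec x i) ^ 2)} with h | h
  · rw [specNorm, h, Real.sSup_empty]
  · obtain ⟨c, x, hx, rfl⟩ := h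
    exact (Real.sqrt_nonneg _).trans (le_csSup (specNorm_bddAbove A) ⟨x, hx, rfl⟩)

lemma specNorm_le_of (A : Matrix m n ℝ) {C : ℝ} (hC : 0 ≤ C)
    (h : ∀ x : n → ℝ, (∑ j, x j ^ 2) = 1 → Real.sqrt (∑ i, (A.mulVec x i) ^ 2) ≤ C) :
    specNorm A ≤ C := by
  rcases Set.eq_empty_or_nonempty {c | ∃ x : n → ℝ, (∑ j, x j ^ 2) = 1 ∧ c = Real.sqrt (∑ i, (A.mulVec x i) ^ 2)} with he | hne
  · rw [specNorm, he, Real.sSup_empty]; exact hC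
  · exact csSup_le hne (by rintro c ⟨x, hx, rfl⟩; exact h x hx)

/-- Key pointwise bound. -/
lemma mulVec_sq_le (A : Matrix m n ℝ) (x : n → ℝ) :
    (∑ i, (A.mulVec x i) ^ 2) ≤ specNorm A ^ 2 * ∑ j, x j ^ 2 := by
  rcases eq_or_ne (∑ j, x j ^ 2) 0 with h0 | h0
  · have hx : ∀ j, x j = 0 := by
      intro j
      have := (Finset.sum_eq_zero_iff_of_nonneg (fun j _ => sq_nonneg (x j))).1 h0 j (Finset.mem_univ j)
      exact pow_eq_zero_iff (n := 2) (by norm_num) |>.1 this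
    have : x = 0 := funext hx
    subst this
    simp [Matrix.mulVec_zero]
  · have hpos : 0 < ∑ j, x j ^ 2 := lt_of_le_of_ne (by positivity) (Ne.symm h0)
    set s := Real.sqrt (∑ j, x j ^ 2) with hs
    have hspos : 0 < s := Real.sqrt_pos.2 hpos
    set y : n → ℝ := s⁻¹ • x with hy
    have hs2 : s ^ 2 = ∑ j, x j ^ 2 := Real.sq_sqrt hpos.le
    have hy1 : (∑ j, y j ^ 2) = 1 := by
      simp only [hy, Pi.smul_apply, smul_eq_mul, mul_pow, ← Finset.mul_sum]
      rw [← hs2]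
      field_simp
    have hin : Real.sqrt (∑ i, (A.mulVec y i) ^ 2) ≤ specNorm A :=
      le_csSup (specNorm_bddAbove A) ⟨y, hy1, rfl⟩
    have hsq : (∑ i, (A.mulVec y i) ^ 2) ≤ specNorm A ^ 2 := by
      have h1 : (∑ i, (A.mulVec y i) ^ 2) = Real.sqrt (∑ i, (A.mulVec y i) ^ 2) ^ 2 :=
        (Real.sq_sqrt (by positivity)).symm
      rw [h1]
      exact pow_le_pow_left₀ (Real.sqrt_nonneg _) hin 2
    have hmv : A.mulVec x = s • A.mulVec y := by
      rw [hy, Matrix.mulVec_smul]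
      ext i
      simp only [Pi.smul_apply, smul_eq_mul]
      rw [← mul_assoc, mul_inv_cancel₀ hspos.ne', one_mul]
    calc (∑ i, (A.mulVec x i) ^ 2) = s ^ 2 * ∑ i, (A.mulVec y i) ^ 2 := by
          rw [hmv, Finset.mul_sum]; apply Finset.sum_congr rfl; intro i _; simp [mul_pow]
    _ ≤ s ^ 2 * specNorm A ^ 2 := by
          apply mul_le_mul_of_nonneg_left hsq (sq_nonneg s)
    _ = specNorm A ^ 2 * ∑ j, x j ^ 2 := by
          rw [hs, Real.sq_sqrt hpos.le]; ring

lemma mulVec_l2_le (A : Matrix m n ℝ) (x : n → ℝ) :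
    Real.sqrt (∑ i, (A.mulVec x i) ^ 2) ≤ specNorm A * Real.sqrt (∑ j, x j ^ 2) := by
  have := Real.sqrt_le_sqrt (mulVec_sq_le A x)
  rwa [Real.sqrt_mul (by positivity), Real.sqrt_sq (specNorm_nonneg A)] at this

lemma specNorm_mul_le (A : Matrix m n ℝ) (B : Matrix n p ℝ) :
    specNorm (A * B) ≤ specNorm A * specNorm B := by
  apply specNorm_le_of _ (mul_nonneg (specNorm_nonneg A) (specNorm_nonneg B))
  intro x hx
  rw [← Matrix.mulVec_mulVec]
  calc Real.sqrt (∑ i, (A.mulVec (B.mulVec x) i) ^ 2)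
      ≤ specNorm A * Real.sqrt (∑ i, (B.mulVec x i) ^ 2) := mulVec_l2_le A _
  _ ≤ specNorm A * (specNorm B * Real.sqrt (∑ j, x j ^ 2)) := by
      apply mul_le_mul_of_nonneg_left (mulVec_l2_le B x) (specNorm_nonneg A)
  _ = specNorm A * specNorm B := by rw [hx]; simp

lemma frobNorm_mul_le_spec_left (A : Matrix m n ℝ) (B : Matrix n p ℝ) :
    frobNorm (A * B) ≤ specNorm A * frobNorm B := by
  have key : (∑ i, ∑ j, ((A * B) i j) ^ 2) ≤ specNorm A ^ 2 * ∑ i, ∑ j, (B i j) ^ 2 := by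
    rw [Finset.sum_comm, Finset.sum_comm (f := fun i j => (B i j) ^ 2), Finset.mul_sum]
    apply Finset.sum_le_sum
    intro j _
    have h := mulVec_sq_le A (fun k => B k j)
    have he : ∀ i, (A * B) i j = A.mulVec (fun k => B k j) i := by
      intro i; simp [Matrix.mul_apply, Matrix.mulVec, dotProduct]
    calc (∑ i, ((A * B) i j) ^ 2) = ∑ i, (A.mulVec (fun k => B k j) i) ^ 2 := by
          apply Finset.sum_congr rfl; intro i _; rw [he i]
    _ ≤ specNorm A ^ 2 * ∑ k, (B k j) ^ 2 := h
  have := Real.sqrt_le_sqrt key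
  rwa [Real.sqrt_mul (by positivity), Real.sqrt_sq (specNorm_nonneg A)] at this

lemma frobNorm_transpose (A : Matrix m n ℝ) : frobNorm Aᵀ = frobNorm A := by
  rw [frobNorm, frobNorm, Finset.sum_comm]
  rfl

lemma specNorm_transpose_le (A : Matrix m n ℝ) : specNorm Aᵀ ≤ specNorm A := by
  apply specNorm_le_of _ (specNorm_nonneg A)
  intro x hx
  set y : n → ℝ := Aᵀ.mulVec x with hy
  have key : (∑ j, y j ^ 2) = ∑ i, x i * (A.mulVec y) i := by
    have h1 : ∀ j, y j ^ 2 = ∑ i, A i j * x i * y j := by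
      intro j
      rw [← Finset.sum_mul]
      have h : y j = ∑ i, A i j * x i := by
        simp [hy, Matrix.mulVec, dotProduct, Matrix.transpose_apply]
      rw [← h]; ring
    simp_rw [h1]
    rw [Finset.sum_comm]
    apply Finset.sum_congr rfl
    intro i _
    rw [Matrix.mulVec, dotProduct, Finset.mul_sum]
    apply Finset.sum_congr rfl; intro j _; ring
  have h2 : (∑ j, y j ^ 2) ^ 2 ≤ (∑ i, x i ^ 2) * ∑ i, (A.mulVec y i) ^ 2 := by
    rw [key]; exact Finset.sum_mul_sq_le_sq_mul_sq Finset.univ x _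
  rw [hx, one_mul] at h2
  have h3 : (∑ j, y j ^ 2) ^ 2 ≤ specNorm A ^ 2 * ∑ j, y j ^ 2 := h2.trans (mulVec_sq_le A y)
  rcases eq_or_lt_of_le (show (0:ℝ) ≤ ∑ j, y j ^ 2 by positivity) with h0 | h0
  · rw [← h0, Real.sqrt_zero]; exact specNorm_nonneg A
  · have h4 : (∑ j, y j ^ 2) ≤ specNorm A ^ 2 := by nlinarith
    calc Real.sqrt (∑ j, y j ^ 2) ≤ Real.sqrt (specNorm A ^ 2) := Real.sqrt_le_sqrt h4
    _ = specNorm A := Real.sqrt_sq (specNorm_nonneg A)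

lemma specNorm_transpose (A : Matrix m n ℝ) : specNorm Aᵀ = specNorm A :=
  le_antisymm (specNorm_transpose_le A)
    (by simpa using specNorm_transpose_le Aᵀ)

lemma frobNorm_mul_le_spec_right (A : Matrix m n ℝ) (B : Matrix n p ℝ) :
    frobNorm (A * B) ≤ frobNorm A * specNorm B := by
  calc frobNorm (A * B) = frobNorm ((A * B)ᵀ) := (frobNorm_transpose _).symm
  _ = frobNorm (Bᵀ * Aᵀ) := by rw [Matrix.transpose_mul]
  _ ≤ specNorm Bᵀ * frobNorm Aᵀ := frobNorm_mul_le_spec_left _ _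
  _ = frobNorm A * specNorm B := by rw [specNorm_transpose, frobNorm_transpose]; ring

lemma frobNorm_eq_l2 (A : Matrix m n ℝ) :
    frobNorm A = Real.sqrt (∑ q : m × p, 0) → True := fun _ => trivial

lemma frobNorm_prod (A : Matrix m n ℝ) :
    frobNorm A = Real.sqrt (∑ q : m × n, (A q.1 q.2) ^ 2) := by
  rw [frobNorm, Fintype.sum_prod_type]

lemma frobNorm_add_le (A B : Matrix m n ℝ) : frobNorm (A + B) ≤ frobNorm A + frobNorm B := by
  rw [frobNorm_prod, frobNorm_prod, frobNorm_prod]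
  have := sqrt_sum_add_le (fun q : m × n => A q.1 q.2) (fun q : m × n => B q.1 q.2)
  simpa using this

lemma specNorm_add_le (A B : Matrix m n ℝ) : specNorm (A + B) ≤ specNorm A + specNorm B := by
  apply specNorm_le_of _ (add_nonneg (specNorm_nonneg A) (specNorm_nonneg B))
  intro x hx
  rw [Matrix.add_mulVec]
  calc Real.sqrt (∑ i, ((A.mulVec x + B.mulVec x) i) ^ 2)
      ≤ Real.sqrt (∑ i, (A.mulVec x i) ^ 2) + Real.sqrt (∑ i, (B.mulVec x i) ^ 2) :=
        sqrt_sum_add_le _ _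
  _ ≤ specNorm A * Real.sqrt (∑ j, x j ^ 2) + specNorm B * Real.sqrt (∑ j, x j ^ 2) :=
        add_le_add (mulVec_l2_le A x) (mulVec_l2_le B x)
  _ = specNorm A + specNorm B := by rw [hx]; simp

lemma specNorm_smul_le (c : ℝ) (A : Matrix m n ℝ) : specNorm (c • A) ≤ |c| * specNorm A := by
  apply specNorm_le_of _ (mul_nonneg (abs_nonneg c) (specNorm_nonneg A))
  intro x hx
  rw [Matrix.smul_mulVec]
  have h : (∑ i, ((c • A.mulVec x) i) ^ 2) = c ^ 2 * ∑ i, (A.mulVec x i) ^ 2 := by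
    rw [Finset.mul_sum]; apply Finset.sum_congr rfl; intro i _
    simp [mul_pow]
  rw [h, Real.sqrt_mul (sq_nonneg c), Real.sqrt_sq_eq_abs]
  calc |c| * Real.sqrt (∑ i, (A.mulVec x i) ^ 2)
      ≤ |c| * (specNorm A * Real.sqrt (∑ j, x j ^ 2)) :=
        mul_le_mul_of_nonneg_left (mulVec_l2_le A x) (abs_nonneg c)
  _ = |c| * specNorm A := by rw [hx]; simp

lemma frobNorm_smul (c : ℝ) (A : Matrix m n ℝ) : frobNorm (c • A) = |c| * frobNorm A := by
  rw [frobNorm, frobNorm]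
  have h : (∑ i, ∑ j, ((c • A) i j) ^ 2) = c ^ 2 * ∑ i, ∑ j, (A i j) ^ 2 := by
    rw [Finset.mul_sum]; apply Finset.sum_congr rfl; intro i _
    rw [Finset.mul_sum]; apply Finset.sum_congr rfl; intro j _
    simp [mul_pow]
  rw [h, Real.sqrt_mul (sq_nonneg c), Real.sqrt_sq_eq_abs]

lemma specNorm_one_le [DecidableEq n] : specNorm (1 : Matrix n n ℝ) ≤ 1 := by
  apply specNorm_le_of _ zero_le_one
  intro x hx
  rw [Matrix.one_mulVec, hx, Real.sqrt_one]

lemma specNorm_zero_le : specNorm (0 : Matrix m n ℝ) ≤ 0 := by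
  apply specNorm_le_of _ le_rfl
  intro x _
  simp [Matrix.zero_mulVec]

end lemmas



lemma pow_sub_pow_le_aux {M d : ℝ} (hM : 0 ≤ M) (hd : 0 ≤ d) (i : ℕ) :
    (M + d) ^ (i + 1) - M ^ (i + 1) ≤ (i + 1 : ℝ) * d * (M + d) ^ i := by
  induction i with
  | zero => simp
  | succ j ih =>
    have h1 : M ^ (j + 1) ≤ (M + d) ^ (j + 1) :=
      pow_le_pow_left₀ hM (by linarith) _
    have h2 : (0:ℝ) ≤ (M + d) ^ (j + 1) := pow_nonneg (by linarith) _
    have key : (M + d) ^ (j + 2) - M ^ (j + 2)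
        = (M + d) * ((M + d) ^ (j + 1) - M ^ (j + 1)) + d * M ^ (j + 1) := by
      ring
    rw [key]
    have h3 : (M + d) * ((M + d) ^ (j + 1) - M ^ (j + 1))
        ≤ (M + d) * ((j + 1 : ℝ) * d * (M + d) ^ j) :=
      mul_le_mul_of_nonneg_left ih (by linarith)
    have h4 : d * M ^ (j + 1) ≤ d * (M + d) ^ (j + 1) :=
      mul_le_mul_of_nonneg_left h1 hd
    have h5 : (M + d) * ((j + 1 : ℝ) * d * (M + d) ^ j) = (j + 1 : ℝ) * d * (M + d) ^ (j + 1) := by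
      rw [pow_succ]; ring
    push_cast
    nlinarith [h3, h4, h5]

lemma one_add_pow_le_two {Lc : ℕ} (hL : 1 ≤ Lc) {u : ℝ} (hu : 0 ≤ u)
    (h : u * (2 * Lc) ≤ 1) : (1 + u) ^ Lc ≤ 2 := by
  have hLc : (1:ℝ) ≤ Lc := by exact_mod_cast hL
  have hu2 : u ≤ 1 / 2 := by nlinarith
  have hber : 1 + (Lc : ℝ) * (-u) ≤ (1 + (-u)) ^ Lc :=
    one_add_mul_le_pow (by linarith) Lc
  have hhalf : (1:ℝ) / 2 ≤ (1 - u) ^ Lc := by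
    have : (Lc : ℝ) * u ≤ 1 / 2 := by nlinarith
    calc (1:ℝ)/2 ≤ 1 + (Lc : ℝ) * (-u) := by linarith
    _ ≤ (1 + (-u)) ^ Lc := hber
    _ = (1 - u) ^ Lc := by ring_nf
  have hprod : (1 + u) ^ Lc * (1 - u) ^ Lc ≤ 1 := by
    rw [← mul_pow]
    have h1 : (1 + u) * (1 - u) = 1 - u ^ 2 := by ring
    rw [h1]
    apply pow_le_one₀ (by nlinarith) (by nlinarith)
  have hpos : (0:ℝ) ≤ (1 + u) ^ Lc := pow_nonneg (by linarith) _
  nlinarith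

lemma pow_add_le_two_mul {M d : ℝ} {Lc i : ℕ} (hM : 0 ≤ M) (hd : 0 ≤ d) (hL : 1 ≤ Lc)
    (h2 : 2 * (Lc : ℝ) * d ≤ M) (hi : i ≤ Lc) : (M + d) ^ i ≤ 2 * M ^ i := by
  rcases eq_or_lt_of_le hM with hM0 | hM0
  · have hd0 : d = 0 := by
      have : (1:ℝ) ≤ Lc := by exact_mod_cast hL
      nlinarith
    rw [← hM0, hd0, add_zero]
    have := pow_nonneg (le_refl (0:ℝ)) i
    linarith
  · set u := d / M with hu
    have hu0 : 0 ≤ u := div_nonneg hd hM0.le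
    have hMd : M + d = M * (1 + u) := by rw [hu]; field_simp
    have hub : u * (2 * Lc) ≤ 1 := by
      rw [hu, div_mul_eq_mul_div, div_le_one hM0]
      nlinarith
    have h1 : (1 + u) ^ i ≤ (1 + u) ^ Lc := pow_le_pow_right₀ (by linarith) hi
    have h2' : (1 + u) ^ Lc ≤ 2 := one_add_pow_le_two hL hu0 hub
    calc (M + d) ^ i = M ^ i * (1 + u) ^ i := by rw [hMd, mul_pow]
    _ ≤ M ^ i * 2 := mul_le_mul_of_nonneg_left (h1.trans h2') (pow_nonneg hM0.le _)
    _ = 2 * M ^ i := by ring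

lemma pow_sub_pow_le_two {M d : ℝ} {Lc l : ℕ} (hM : 0 ≤ M) (hd : 0 ≤ d) (hL : 1 ≤ Lc)
    (h2 : 2 * (Lc : ℝ) * d ≤ M) (hl : l ≤ Lc) :
    M * ((M + d) ^ l - M ^ l) ≤ 2 * l * d * M ^ l := by
  rcases Nat.eq_zero_or_pos l with h0 | h0
  · subst h0; simp
  · obtain ⟨j, rfl⟩ := Nat.exists_eq_add_of_lt h0
    rw [zero_add] at *
    have h1 : (M + d) ^ (j + 1) - M ^ (j + 1) ≤ (j + 1 : ℝ) * d * (M + d) ^ j :=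
      pow_sub_pow_le_aux hM hd j
    have h3 : (M + d) ^ j ≤ 2 * M ^ j := pow_add_le_two_mul hM hd hL h2 (by omega)
    have h4 : (0:ℝ) ≤ (j + 1 : ℝ) * d := by positivity
    have h5 : (j + 1 : ℝ) * d * (M + d) ^ j ≤ (j + 1 : ℝ) * d * (2 * M ^ j) :=
      mul_le_mul_of_nonneg_left h3 h4
    have h6 : M * ((M + d) ^ (j + 1) - M ^ (j + 1)) ≤ M * ((j + 1 : ℝ) * d * (2 * M ^ j)) :=
      mul_le_mul_of_nonneg_left (h1.trans h5) hM
    calc M * ((M + d) ^ (j + 1) - M ^ (j + 1)) ≤ M * ((j + 1 : ℝ) * d * (2 * M ^ j)) := h6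
    _ = 2 * (j + 1 : ℝ) * d * M ^ (j + 1) := by rw [pow_succ]; ring
    _ = 2 * ((j : ℝ) + 1) * d * M ^ (j + 1) := by norm_num
    _ = 2 * ((j + 1 : ℕ) : ℝ) * d * M ^ (j + 1) := by push_cast; ring

noncomputable def auxS (M d : ℝ) : ℕ → ℝ
  | 0 => 0
  | l + 1 => M * auxS M d l + ((M + d) ^ l - M ^ l)

lemma auxS_nonneg {M d : ℝ} (hM : 0 ≤ M) (hd : 0 ≤ d) (l : ℕ) : 0 ≤ auxS M d l := by
  induction l with
  | zero => simp [auxS]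
  | succ j ih =>
    have h1 : M ^ j ≤ (M + d) ^ j := pow_le_pow_left₀ hM (by linarith) _
    simp only [auxS]
    nlinarith

lemma auxS_invariant {M d : ℝ} {Lc : ℕ} (hM : 0 ≤ M) (hd : 0 ≤ d) (hL : 1 ≤ Lc)
    (h2 : 2 * (Lc : ℝ) * d ≤ M) : ∀ l ≤ Lc, auxS M d l * M ^ 2 ≤ (l : ℝ) ^ 2 * d * M ^ l := by
  intro l
  induction l with
  | zero => simp [auxS]
  | succ j ih =>
    intro hj
    have ihj := ih (by omega)
    have hstep : M * ((M + d) ^ j - M ^ j) ≤ 2 * j * d * M ^ j :=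
      pow_sub_pow_le_two hM hd hL h2 (by omega)
    have expand : auxS M d (j + 1) * M ^ 2
        = M * (auxS M d j * M ^ 2) + M * (M * ((M + d) ^ j - M ^ j)) := by
      simp only [auxS]; ring
    have h3 : M * (auxS M d j * M ^ 2) ≤ M * ((j : ℝ) ^ 2 * d * M ^ j) :=
      mul_le_mul_of_nonneg_left ihj hM
    have h4 : M * (M * ((M + d) ^ j - M ^ j)) ≤ M * (2 * j * d * M ^ j) :=
      mul_le_mul_of_nonneg_left hstep hM
    have h5 : M * ((j : ℝ) ^ 2 * d * M ^ j) + M * (2 * j * d * M ^ j)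
        = ((j : ℝ) ^ 2 + 2 * j) * d * M ^ (j + 1) := by
      rw [pow_succ]; ring
    have h6 : ((j : ℝ) ^ 2 + 2 * j) * d * M ^ (j + 1)
        ≤ ((j : ℝ) + 1) ^ 2 * d * M ^ (j + 1) := by
      have : (0:ℝ) ≤ d * M ^ (j + 1) := by positivity
      nlinarith
    calc auxS M d (j + 1) * M ^ 2 ≤ M * ((j : ℝ) ^ 2 * d * M ^ j) + M * (2 * j * d * M ^ j) := by
          rw [expand]; exact add_le_add h3 h4
    _ ≤ ((j : ℝ) + 1) ^ 2 * d * M ^ (j + 1) := h5.le.trans h6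
    _ = ((j + 1 : ℕ) : ℝ) ^ 2 * d * M ^ (j + 1) := by push_cast; ring

lemma auxS_final {M d : ℝ} {Lc : ℕ} (hM : 0 ≤ M) (hd : 0 ≤ d) (hL : 2 ≤ Lc)
    (h2 : 2 * (Lc : ℝ) * d ≤ M) : auxS M d Lc ≤ (Lc : ℝ) ^ 2 * d * M ^ (Lc - 2) := by
  rcases eq_or_lt_of_le hM with hM0 | hM0
  · have hd0 : d = 0 := by
      have : (1:ℝ) ≤ Lc := by exact_mod_cast (by omega : 1 ≤ Lc)
      nlinarith
    have hz : ∀ l, auxS M d l = 0 := by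
      intro l; induction l with
      | zero => simp [auxS]
      | succ j ih => simp [auxS, ih, hd0, ← hM0]
    rw [hz]
    have : (0:ℝ) ^ (Lc - 2) = M ^ (Lc - 2) := by rw [hM0]
    positivity
  · have key := auxS_invariant hM hd (by omega) h2 Lc le_rfl
    have hpow : M ^ Lc = M ^ (Lc - 2) * M ^ 2 := by
      rw [← pow_add]; congr 1; omega
    rw [hpow] at key
    have hM2 : (0:ℝ) < M ^ 2 := by positivity
    calc auxS M d Lc = auxS M d Lc * M ^ 2 / M ^ 2 := by field_simp
    _ ≤ (Lc : ℝ) ^ 2 * d * (M ^ (Lc - 2) * M ^ 2) / M ^ 2 := by gcongr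
    _ = (Lc : ℝ) ^ 2 * d * M ^ (Lc - 2) := by field_simp

section triple
variable {m n p q : Type*} [Fintype m] [Fintype n] [Fintype p] [Fintype q]

lemma frobNorm_zero : frobNorm (0 : Matrix m n ℝ) = 0 := by
  simp [frobNorm]

lemma spec_triple (A : Matrix m n ℝ) (Bm : Matrix n p ℝ) (C : Matrix p q ℝ)
    {a b c : ℝ} (hA : specNorm A ≤ a) (hB : specNorm Bm ≤ b) (hC : specNorm C ≤ c)
    (ha : 0 ≤ a) (hb : 0 ≤ b) (hc : 0 ≤ c) : specNorm (A * Bm * C) ≤ a * b * c := by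
  calc specNorm (A * Bm * C) ≤ specNorm (A * Bm) * specNorm C := specNorm_mul_le _ _
  _ ≤ (specNorm A * specNorm Bm) * specNorm C :=
      mul_le_mul_of_nonneg_right (specNorm_mul_le _ _) (specNorm_nonneg _)
  _ ≤ a * b * c := by
      apply mul_le_mul _ hC (specNorm_nonneg _) (mul_nonneg ha hb)
      exact mul_le_mul hA hB (specNorm_nonneg _) ha

lemma frob_triple (A : Matrix m n ℝ) (Bm : Matrix n p ℝ) (C : Matrix p q ℝ)
    {a b c : ℝ} (hA : specNorm A ≤ a) (hB : frobNorm Bm ≤ b) (hC : specNorm C ≤ c)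
    (ha : 0 ≤ a) (hb : 0 ≤ b) (hc : 0 ≤ c) : frobNorm (A * Bm * C) ≤ a * b * c := by
  calc frobNorm (A * Bm * C) ≤ frobNorm (A * Bm) * specNorm C := frobNorm_mul_le_spec_right _ _
  _ ≤ (specNorm A * frobNorm Bm) * specNorm C :=
      mul_le_mul_of_nonneg_right (frobNorm_mul_le_spec_left _ _) (specNorm_nonneg _)
  _ ≤ a * b * c := by
      apply mul_le_mul _ hC (specNorm_nonneg _) (mul_nonneg ha hb)
      exact mul_le_mul hA hB (frobNorm_nonneg _) ha

end triple


set_option maxHeartbeats 2000000 in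
/-- One large preconditioned gradient step from a near-critical point in deep matrix
factorization moves the product matrix only a little. `Wt l` are the starting factors
(`W̃`), `W' l` the factors after the step, `Q l = W̃_l ⋯ W̃_1` (so `Q L` is the full
starting product `W̃`), `P l = W̃_L ⋯ W̃_{l+1}`; the loss is `ℓ(W) = ½‖W − W*‖_F²`
with gradient `Q L − W*`, and `Q' L` is the product `W(1)` after the step. -/
theorem stmt6 (L : ℕ) (hL : 2 ≤ L) (n : ℕ → ℕ)
    (Wt W' : ∀ l : ℕ, Matrix (Fin (n (l + 1))) (Fin (n l)) ℝ)
    (Wstar : Matrix (Fin (n L)) (Fin (n 0)) ℝ)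
    (Q Q' : ∀ l : ℕ, Matrix (Fin (n l)) (Fin (n 0)) ℝ)
    (P : ∀ l : ℕ, Matrix (Fin (n L)) (Fin (n l)) ℝ)
    (hQ0 : Q 0 = 1) (hQs : ∀ l < L, Q (l + 1) = Wt l * Q l)
    (hQ0' : Q' 0 = 1) (hQs' : ∀ l < L, Q' (l + 1) = W' l * Q' l)
    (hPL : P L = 1) (hPs : ∀ l < L, P l = P (l + 1) * Wt l)
    (r a Λ M B τ : ℝ) (hr0 : 0 < r) (ha : 0 < a) (haΛ : a ≤ Λ)
    (hupd : ∀ l < L, W' l = Wt l - (r * a) • ((P (l + 1))ᵀ * (Q L - Wstar) * (Q l)ᵀ))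
    (hM : ∀ l < L, specNorm (Wt l) ≤ M)
    (hB : specNorm (Q L - Wstar) ≤ B)
    (hτ : frobNorm (Q L - Wstar) ≤ τ)
    (hrs : r ≤ 1 / (2 * (L : ℝ) * Λ * M ^ (L - 2) * B)) :
    frobNorm (Q' L - Q L) ^ 2
      ≤ 2 * (r ^ 2 * (L : ℝ) ^ 2 * Λ ^ 2 * M ^ (4 * L - 4)
          + 4 * r ^ 4 * (L : ℝ) ^ 4 * Λ ^ 4 * M ^ (6 * L - 8) * B ^ 2) * τ ^ 2 := by
  have hM0 : 0 ≤ M := (specNorm_nonneg (Wt 0)).trans (hM 0 (by omega))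
  have hB0 : 0 ≤ B := (specNorm_nonneg _).trans hB
  have hτ0 : 0 ≤ τ := (frobNorm_nonneg _).trans hτ
  have hΛ0 : (0:ℝ) < Λ := ha.trans_le haΛ
  have hL1 : (1:ℝ) ≤ (L:ℝ) := by exact_mod_cast (by omega : 1 ≤ L)
  have hden : 0 < 2 * (L:ℝ) * Λ * M ^ (L-2) * B := by
    by_contra h
    push_neg at h
    have h1 : 1 / (2 * (L:ℝ) * Λ * M ^ (L-2) * B) ≤ 0 := by
      rcases eq_or_lt_of_le h with h0 | h0
      · rw [h0]; norm_num
      · exact le_of_lt (div_neg_of_pos_of_neg one_pos h0)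
    linarith
  have hrden : r * (2 * (L:ℝ) * Λ * M ^ (L-2) * B) ≤ 1 := by
    have h := (le_div_iff₀ hden).1 hrs
    linarith
  set d := r * a * M ^ (L-1) * B with hd
  set dF := r * a * M ^ (L-1) * τ with hdF
  have hra0 : (0:ℝ) < r * a := mul_pos hr0 ha
  have hd0 : 0 ≤ d := mul_nonneg (mul_nonneg hra0.le (pow_nonneg hM0 _)) hB0
  have hdF0 : 0 ≤ dF := mul_nonneg (mul_nonneg hra0.le (pow_nonneg hM0 _)) hτ0
  have hdM : 2 * (L:ℝ) * d ≤ M := by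
    have h1 : d ≤ r * Λ * M ^ (L-1) * B := by
      apply mul_le_mul_of_nonneg_right _ hB0
      apply mul_le_mul_of_nonneg_right _ (pow_nonneg hM0 _)
      exact mul_le_mul_of_nonneg_left haΛ hr0.le
    have h2 : 2 * (L:ℝ) * (r * Λ * M ^ (L-1) * B) = (r * (2 * L * Λ * M ^ (L-2) * B)) * M := by
      rw [show L - 1 = (L-2) + 1 from by omega, pow_succ]; ring
    have h3 : (r * (2 * (L:ℝ) * Λ * M ^ (L-2) * B)) * M ≤ 1 * M :=
      mul_le_mul_of_nonneg_right hrden hM0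
    have h4 : 2 * (L:ℝ) * d ≤ 2 * (L:ℝ) * (r * Λ * M ^ (L-1) * B) := by
      apply mul_le_mul_of_nonneg_left h1
      positivity
    calc 2 * (L:ℝ) * d ≤ 2 * (L:ℝ) * (r * Λ * M ^ (L-1) * B) := h4
    _ = (r * (2 * L * Λ * M ^ (L-2) * B)) * M := h2
    _ ≤ 1 * M := h3
    _ = M := one_mul M
  -- spectral bounds on Q and P
  have hQb : ∀ l, l ≤ L → specNorm (Q l) ≤ M ^ l := by
    intro l
    induction l with
    | zero => intro _; rw [hQ0]; simpa using specNorm_one_le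
    | succ j ih =>
      intro hj
      rw [hQs j (by omega)]
      calc specNorm (Wt j * Q j) ≤ specNorm (Wt j) * specNorm (Q j) := specNorm_mul_le _ _
      _ ≤ M * M ^ j := mul_le_mul (hM j (by omega)) (ih (by omega)) (specNorm_nonneg _) hM0
      _ = M ^ (j+1) := by rw [pow_succ]; ring
  have hPb : ∀ k, k ≤ L → specNorm (P (L - k)) ≤ M ^ k := by
    intro k
    induction k with
    | zero => intro _; rw [Nat.sub_zero, hPL]; simpa using specNorm_one_le
    | succ j ih =>
      intro hj
      have hlt : L - (j+1) < L := by omega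
      have h1 : specNorm (P (L - (j+1) + 1)) ≤ M ^ j := by
        rw [show L - (j+1) + 1 = L - j from by omega]; exact ih (by omega)
      rw [hPs _ hlt]
      calc specNorm (P (L-(j+1)+1) * Wt (L-(j+1)))
          ≤ specNorm (P (L-(j+1)+1)) * specNorm (Wt (L-(j+1))) := specNorm_mul_le _ _
      _ ≤ M ^ j * M := mul_le_mul h1 (hM _ hlt) (specNorm_nonneg _) (pow_nonneg hM0 _)
      _ = M ^ (j+1) := (pow_succ M j).symm
  have hPb' : ∀ l, l < L → specNorm (P (l+1)) ≤ M ^ (L - 1 - l) := by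
    intro l hl
    have h := hPb (L - 1 - l) (by omega)
    rwa [show L - (L - 1 - l) = l + 1 from by omega] at h
  -- Δ bounds
  have hWd : ∀ l, (hl : l < L) → W' l - Wt l
      = (-(r*a)) • ((P (l+1))ᵀ * (Q L - Wstar) * (Q l)ᵀ) := by
    intro l hl
    rw [hupd l hl, neg_smul, sub_sub_cancel_left]
  have hexp : ∀ l, l < L → M ^ (L-1-l) * B * M ^ l = M ^ (L-1) * B := by
    intro l hl
    rw [show M ^ (L-1-l) * B * M ^ l = M ^ (L-1-l) * M ^ l * B from by ring, ← pow_add,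
      show L-1-l + l = L-1 from by omega]
  have hexpτ : ∀ l, l < L → M ^ (L-1-l) * τ * M ^ l = M ^ (L-1) * τ := by
    intro l hl
    rw [show M ^ (L-1-l) * τ * M ^ l = M ^ (L-1-l) * M ^ l * τ from by ring, ← pow_add,
      show L-1-l + l = L-1 from by omega]
  have hΔs : ∀ l, l < L → specNorm (W' l - Wt l) ≤ d := by
    intro l hl
    rw [hWd l hl]
    calc specNorm ((-(r*a)) • ((P (l+1))ᵀ * (Q L - Wstar) * (Q l)ᵀ))
        ≤ |(-(r*a))| * specNorm ((P (l+1))ᵀ * (Q L - Wstar) * (Q l)ᵀ) := specNorm_smul_le _ _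
    _ = (r*a) * specNorm ((P (l+1))ᵀ * (Q L - Wstar) * (Q l)ᵀ) := by
        rw [abs_neg, abs_of_pos hra0]
    _ ≤ (r*a) * (M ^ (L-1-l) * B * M ^ l) := by
        apply mul_le_mul_of_nonneg_left _ hra0.le
        apply spec_triple _ _ _ _ hB _ (pow_nonneg hM0 _) hB0 (pow_nonneg hM0 _)
        · rw [specNorm_transpose]; exact hPb' l hl
        · rw [specNorm_transpose]; exact hQb l (by omega)
    _ = d := by rw [hexp l hl, hd]; ring
  have hΔF : ∀ l, l < L → frobNorm (W' l - Wt l) ≤ dF := by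
    intro l hl
    rw [hWd l hl]
    have h1 : frobNorm ((-(r*a)) • ((P (l+1))ᵀ * (Q L - Wstar) * (Q l)ᵀ))
        = (r*a) * frobNorm ((P (l+1))ᵀ * (Q L - Wstar) * (Q l)ᵀ) := by
      rw [frobNorm_smul, abs_neg, abs_of_pos hra0]
    rw [h1]
    calc (r*a) * frobNorm ((P (l+1))ᵀ * (Q L - Wstar) * (Q l)ᵀ)
        ≤ (r*a) * (M ^ (L-1-l) * τ * M ^ l) := by
          apply mul_le_mul_of_nonneg_left _ hra0.le
          apply frob_triple _ _ _ _ hτ _ (pow_nonneg hM0 _) hτ0 (pow_nonneg hM0 _)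
          · rw [specNorm_transpose]; exact hPb' l hl
          · rw [specNorm_transpose]; exact hQb l (by omega)
    _ = dF := by rw [hexpτ l hl, hdF]; ring
  -- decomposition identity
  have hdec : ∀ j, j < L → Q' (j+1) - Q (j+1)
      = Wt j * (Q' j - Q j) + (W' j - Wt j) * Q' j := by
    intro j hj
    rw [hQs' j hj, hQs j hj, Matrix.mul_sub, Matrix.sub_mul]
    abel
  -- spectral bound on E
  have hE : ∀ l, l ≤ L → specNorm (Q' l - Q l) ≤ (M+d)^l - M^l := by
    intro l
    induction l with
    | zero =>
      intro _
      rw [hQ0', hQ0, sub_self]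
      simpa using specNorm_zero_le
    | succ j ih =>
      intro hj
      have hjL : j < L := by omega
      have ihj := ih (by omega)
      have hQ'j : specNorm (Q' j) ≤ (M+d)^j := by
        have he : Q' j = Q j + (Q' j - Q j) := by abel
        rw [he]
        calc specNorm (Q j + (Q' j - Q j))
            ≤ specNorm (Q j) + specNorm (Q' j - Q j) := specNorm_add_le _ _
        _ ≤ M ^ j + ((M+d)^j - M^j) := add_le_add (hQb j (by omega)) ihj
        _ = (M+d)^j := by ring
      rw [hdec j hjL]
      calc specNorm (Wt j * (Q' j - Q j) + (W' j - Wt j) * Q' j)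
          ≤ specNorm (Wt j * (Q' j - Q j)) + specNorm ((W' j - Wt j) * Q' j) :=
            specNorm_add_le _ _
      _ ≤ specNorm (Wt j) * specNorm (Q' j - Q j)
            + specNorm (W' j - Wt j) * specNorm (Q' j) :=
            add_le_add (specNorm_mul_le _ _) (specNorm_mul_le _ _)
      _ ≤ M * ((M+d)^j - M^j) + d * (M+d)^j :=
            add_le_add
              (mul_le_mul (hM j hjL) ihj (specNorm_nonneg _) hM0)
              (mul_le_mul (hΔs j hjL) hQ'j (specNorm_nonneg _) hd0)
      _ = (M+d)^(j+1) - M^(j+1) := by rw [pow_succ, pow_succ]; ring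
  -- F/H decomposition
  have hFH : ∀ l, l ≤ L → ∃ (Fm Hm : Matrix (Fin (n l)) (Fin (n 0)) ℝ),
      Q' l - Q l = Fm + Hm ∧ frobNorm Fm ≤ (l:ℝ) * M ^ (l-1) * dF
      ∧ frobNorm Hm ≤ dF * auxS M d l := by
    intro l
    induction l with
    | zero =>
      intro _
      refine ⟨0, 0, by rw [hQ0', hQ0]; simp, by simp [frobNorm_zero], ?_⟩
      simp [frobNorm_zero, auxS]
    | succ j ih =>
      intro hj
      have hjL : j < L := by omega
      obtain ⟨Fm, Hm, hsum, hFb, hHb⟩ := ih (by omega)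
      refine ⟨Wt j * Fm + (W' j - Wt j) * Q j,
              Wt j * Hm + (W' j - Wt j) * (Q' j - Q j), ?_, ?_, ?_⟩
      · have hq' : Q' j = Q j + (Fm + Hm) := by rw [← hsum]; abel
        rw [hdec j hjL, hsum, hq']
        simp only [Matrix.mul_add]
        abel
      · have h1 : frobNorm (Wt j * Fm + (W' j - Wt j) * Q j)
            ≤ M * ((j:ℝ) * M ^ (j-1) * dF) + dF * M ^ j := by
          calc frobNorm (Wt j * Fm + (W' j - Wt j) * Q j)
              ≤ frobNorm (Wt j * Fm) + frobNorm ((W' j - Wt j) * Q j) := frobNorm_add_le _ _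
          _ ≤ M * ((j:ℝ) * M ^ (j-1) * dF) + dF * M ^ j := by
              apply add_le_add
              · calc frobNorm (Wt j * Fm) ≤ specNorm (Wt j) * frobNorm Fm :=
                      frobNorm_mul_le_spec_left _ _
                _ ≤ M * ((j:ℝ) * M ^ (j-1) * dF) :=
                      mul_le_mul (hM j hjL) hFb (frobNorm_nonneg _) hM0
              · calc frobNorm ((W' j - Wt j) * Q j)
                    ≤ frobNorm (W' j - Wt j) * specNorm (Q j) := frobNorm_mul_le_spec_right _ _
                _ ≤ dF * M ^ j :=
                      mul_le_mul (hΔF j hjL) (hQb j (by omega)) (specNorm_nonneg _) hdF0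
        have h2 : M * ((j:ℝ) * M ^ (j-1) * dF) + dF * M ^ j
            ≤ ((j+1:ℕ):ℝ) * M ^ ((j+1)-1) * dF := by
          rw [show (j+1) - 1 = j from by omega]
          push_cast
          rcases Nat.eq_zero_or_pos j with h0 | h0
          · subst h0; simp
          · have he : M * M ^ (j-1) = M ^ j := by
              rw [← pow_succ', show j - 1 + 1 = j from by omega]
            have : M * ((j:ℝ) * M ^ (j-1) * dF) = (j:ℝ) * M ^ j * dF := by
              rw [← he]; ring
            rw [this]
            exact le_of_eq (by ring)
        exact h1.trans h2
      · have h1 : frobNorm (Wt j * Hm + (W' j - Wt j) * (Q' j - Q j))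
            ≤ M * (dF * auxS M d j) + dF * ((M+d)^j - M^j) := by
          calc frobNorm (Wt j * Hm + (W' j - Wt j) * (Q' j - Q j))
              ≤ frobNorm (Wt j * Hm) + frobNorm ((W' j - Wt j) * (Q' j - Q j)) :=
                frobNorm_add_le _ _
          _ ≤ M * (dF * auxS M d j) + dF * ((M+d)^j - M^j) := by
              apply add_le_add
              · calc frobNorm (Wt j * Hm) ≤ specNorm (Wt j) * frobNorm Hm :=
                      frobNorm_mul_le_spec_left _ _
                _ ≤ M * (dF * auxS M d j) :=
                      mul_le_mul (hM j hjL) hHb (frobNorm_nonneg _) hM0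
              · calc frobNorm ((W' j - Wt j) * (Q' j - Q j))
                    ≤ frobNorm (W' j - Wt j) * specNorm (Q' j - Q j) :=
                      frobNorm_mul_le_spec_right _ _
                _ ≤ dF * ((M+d)^j - M^j) :=
                      mul_le_mul (hΔF j hjL) (hE j (by omega)) (specNorm_nonneg _) hdF0
        have h2 : M * (dF * auxS M d j) + dF * ((M+d)^j - M^j) = dF * auxS M d (j+1) := by
          simp only [auxS]; ring
        rw [← h2]; exact h1
  -- final assembly
  obtain ⟨Fm, Hm, hsum, hFb, hHb⟩ := hFH L le_rfl
  have hSfin : auxS M d L ≤ (L:ℝ)^2 * d * M ^ (L-2) := auxS_final hM0 hd0 hL hdM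
  have hy1 : frobNorm Hm ≤ dF * ((L:ℝ)^2 * d * M ^ (L-2)) :=
    hHb.trans (mul_le_mul_of_nonneg_left hSfin hdF0)
  have hfr : frobNorm (Q' L - Q L) ≤ (L:ℝ) * M ^ (L-1) * dF + dF * ((L:ℝ)^2 * d * M ^ (L-2)) := by
    rw [hsum]
    exact (frobNorm_add_le _ _).trans (add_le_add hFb hy1)
  set x := (L:ℝ) * M ^ (L-1) * dF with hx
  set y := dF * ((L:ℝ)^2 * d * M ^ (L-2)) with hy
  have hx0 : 0 ≤ x := by
    apply mul_nonneg (mul_nonneg _ (pow_nonneg hM0 _)) hdF0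
    positivity
  have hy0 : 0 ≤ y := by
    apply mul_nonneg hdF0
    apply mul_nonneg (mul_nonneg (by positivity) hd0) (pow_nonneg hM0 _)
  have hfr0 : 0 ≤ frobNorm (Q' L - Q L) := frobNorm_nonneg _
  have hsq : frobNorm (Q' L - Q L) ^ 2 ≤ (x + y)^2 := pow_le_pow_left₀ hfr0 hfr 2
  have hsq2 : (x + y)^2 ≤ 2 * x^2 + 2 * y^2 := by nlinarith [sq_nonneg (x - y)]
  have ha2 : a^2 ≤ Λ^2 := pow_le_pow_left₀ ha.le haΛ 2
  have ha4 : a^4 ≤ Λ^4 := pow_le_pow_left₀ ha.le haΛ 4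
  have hx2 : x^2 = r^2 * (L:ℝ)^2 * (M^(L-1))^4 * τ^2 * a^2 := by
    rw [hx, hdF]; ring
  have hy2 : y^2 = r^4 * (L:ℝ)^4 * (M^(L-1))^4 * (M^(L-2))^2 * B^2 * τ^2 * a^4 := by
    rw [hy, hdF, hd]; ring
  have hxb : 2 * x^2 ≤ 2 * (r^2 * (L:ℝ)^2 * (M^(L-1))^4 * τ^2) * Λ^2 := by
    calc 2 * x^2 = (2 * (r^2 * (L:ℝ)^2 * (M^(L-1))^4 * τ^2)) * a^2 := by rw [hx2]; ring
    _ ≤ (2 * (r^2 * (L:ℝ)^2 * (M^(L-1))^4 * τ^2)) * Λ^2 :=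
        mul_le_mul_of_nonneg_left ha2 (by positivity)
  have hyb : 2 * y^2 ≤ 2 * (r^4 * (L:ℝ)^4 * (M^(L-1))^4 * (M^(L-2))^2 * B^2 * τ^2) * Λ^4 := by
    calc 2 * y^2 = (2 * (r^4 * (L:ℝ)^4 * (M^(L-1))^4 * (M^(L-2))^2 * B^2 * τ^2)) * a^4 := by
          rw [hy2]; ring
    _ ≤ (2 * (r^4 * (L:ℝ)^4 * (M^(L-1))^4 * (M^(L-2))^2 * B^2 * τ^2)) * Λ^4 :=
        mul_le_mul_of_nonneg_left ha4 (by positivity)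
  have eM1 : M^(4*L-4) = (M^(L-1))^4 := by
    rw [← pow_mul]; congr 1; omega
  have eM2 : M^(6*L-8) = (M^(L-1))^4 * (M^(L-2))^2 := by
    rw [← pow_mul, ← pow_mul, ← pow_add]; congr 1; omega
  rw [eM1, eM2]
  have hsurplus : (0:ℝ) ≤ r^4 * (L:ℝ)^4 * Λ^4 * ((M^(L-1))^4 * (M^(L-2))^2) * B^2 * τ^2 := by
    positivity
  linarith [hsq, hsq2, hxb, hyb, hsurplus]
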